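/- Let p ∈ ℂ with ‖p‖ < 1, define θ₃(x) := ∑_{n ∈ ℤ} p^{n²}·exp(2·n·x·i) and θ̃₁(x) := ∑_{n ∈ ℤ} (−1)ⁿ·p^{n²+n}·exp((2n+1)·x·i), and let Z, U ∈ ℂ with θ₃(0) ≠ 0 and θ₃(U) ≠ 0. Set w := θ̃₁(U)/θ₃(U), and for m ∈ ℤ define a_m := (θ₃(0)/θ₃(U))^{m²}·θ₃(Z + mU) and b_m := (θ₃(0)/θ₃(U))^{m²}·θ̃₁(Z + mU) (with natural-number power m²). Then for all m ∈ ℤ: a_{m+1}·a_{m−1} = a_m² + p·w²·b_m² and b_{m+1}·b_{m−1} = b_m² − w²·a_m². -/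

import Mathlib

open Complex

set_option maxHeartbeats 1000000


/-- The Jacobi theta function `θ₃(x) = ∑_{n ∈ ℤ} p^{n²}·e^{2nxi}` with nome `p`. -/
noncomputable def jacobiTheta3 (p x : ℂ) : ℂ :=
  ∑' n : ℤ, p ^ (n ^ 2).toNat * Complex.exp (2 * (n : ℂ) * x * Complex.I)

/-- The renormalized first Jacobi theta function
`θ̃₁(x) = ∑_{n ∈ ℤ} (-1)ⁿ·p^{n²+n}·e^{(2n+1)xi}` with nome `p`. -/
noncomputable def jacobiTheta1t (p x : ℂ) : ℂ :=
  ∑' n : ℤ, (-1 : ℂ) ^ n * p ^ (n ^ 2 + n).toNat *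
    Complex.exp ((2 * (n : ℂ) + 1) * x * Complex.I)

namespace ThetaHirotaAux

/-- summability master lemma -/
lemma summable_master (p : ℂ) (hp : ‖p‖ < 1) (a b : ℤ) (ha : 0 < a)
    (hab : ∀ n : ℤ, 0 ≤ a * n ^ 2 + b * n) (c d x : ℂ) :
    Summable (fun n : ℤ => p ^ (a * n ^ 2 + b * n).toNat *
      Complex.exp ((c * n + d) * x * Complex.I)) := by
  by_cases hp0 : p = 0
  · subst hp0
    apply summable_of_ne_finset_zero (s := Finset.Icc (-(b.natAbs + 1) : ℤ) (b.natAbs + 1))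
    intro n hn
    simp only [Finset.mem_Icc, not_and_or, not_le] at hn
    have hB : -((b.natAbs : ℤ)) ≤ b ∧ b ≤ (b.natAbs : ℤ) := by omega
    have hpos : 0 < a * n ^ 2 + b * n := by
      have hn2 : (b.natAbs : ℤ) + 2 ≤ n ∨ n ≤ -((b.natAbs : ℤ) + 2) := by omega
      have hsq : n ^ 2 = n * n := sq n
      rcases hn2 with h | h
      · nlinarith
      · nlinarith
    rw [zero_pow (by omega), zero_mul]
  · set l := Complex.log p with hl
    have hpl : Complex.exp l = p := Complex.exp_log hp0
    have hre : l.re < 0 := by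
      rw [hl, Complex.log_re]
      exact Real.log_neg (norm_pos_iff.mpr hp0) hp
    set τ : ℂ := (a : ℂ) * l / ((Real.pi : ℂ) * Complex.I) with hτdef
    have hτ : 0 < τ.im := by
      rw [hτdef]
      have : (a : ℂ) * l / ((Real.pi : ℂ) * Complex.I)
          = -((a : ℝ) * l.re / Real.pi : ℝ) * Complex.I + ((a : ℝ) * l.im / Real.pi : ℝ) := by
        push_cast
        have hπ0 : (Real.pi : ℂ) ≠ 0 := by exact_mod_cast Real.pi_ne_zero
        rw [div_eq_iff (mul_ne_zero hπ0 Complex.I_ne_zero)]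
        conv_lhs => rw [← Complex.re_add_im l]
        field_simp
        ring_nf
        rw [Complex.I_sq]
        ring
      rw [this]
      simp only [Complex.add_im, Complex.mul_im, Complex.I_im, Complex.I_re, Complex.ofReal_re,
        Complex.ofReal_im, Complex.neg_re, Complex.neg_im]
      have hπ := Real.pi_pos
      have ha' : (0 : ℝ) < (a : ℝ) := by exact_mod_cast ha
      have h1 : (0 : ℝ) < -((a : ℝ) * l.re) := by nlinarith
      have : 0 < -((a : ℝ) * l.re / Real.pi) := by
        rw [← neg_div]; exact div_pos h1 hπ
      nlinarith
    set z : ℂ := ((b : ℂ) * l + c * x * Complex.I) / (2 * (Real.pi : ℂ) * Complex.I) with hzdef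
    have hsum := (summable_jacobiTheta₂_term_iff z τ).mpr hτ
    refine (hsum.mul_left (Complex.exp (d * x * Complex.I))).congr fun n => ?_
    have hπ : (Real.pi : ℂ) ≠ 0 := by exact_mod_cast Real.pi_ne_zero
    have hI : Complex.I ≠ 0 := Complex.I_ne_zero
    have hcast : (((a * n ^ 2 + b * n).toNat : ℤ) : ℂ) = (a : ℂ) * n ^ 2 + (b : ℂ) * n := by
      rw [Int.toNat_of_nonneg (hab n)]; push_cast; ring
    rw [jacobiTheta₂_term, ← Complex.exp_add, ← hpl, ← Complex.exp_nat_mul, ← Complex.exp_add]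
    congr 1
    have : ((a * n ^ 2 + b * n).toNat : ℂ) = (a : ℂ) * n ^ 2 + (b : ℂ) * n := by
      exact_mod_cast hcast
    rw [this, hzdef, hτdef]
    field_simp
    ring

lemma hsq (n : ℤ) : 0 ≤ n ^ 2 + n := by nlinarith [sq_nonneg (n + 1), sq_nonneg n]

/-- term of θ₃ -/
noncomputable def t3 (p x : ℂ) (n : ℤ) : ℂ :=
  p ^ (n ^ 2).toNat * Complex.exp (2 * (n : ℂ) * x * Complex.I)

/-- term of θ̃₁ -/
noncomputable def t1 (p x : ℂ) (n : ℤ) : ℂ :=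
  (-1 : ℂ) ^ n * p ^ (n ^ 2 + n).toNat * Complex.exp ((2 * (n : ℂ) + 1) * x * Complex.I)

noncomputable def tA (p x : ℂ) (k : ℤ) : ℂ :=
  p ^ (2 * k ^ 2).toNat * Complex.exp (4 * (k : ℂ) * x * Complex.I)

noncomputable def tB (p x : ℂ) (k : ℤ) : ℂ :=
  p ^ (2 * k ^ 2 + 2 * k).toNat * Complex.exp ((4 * (k : ℂ) + 2) * x * Complex.I)

noncomputable def thA (p x : ℂ) : ℂ := ∑' k : ℤ, tA p x k

noncomputable def thB (p x : ℂ) : ℂ := ∑' k : ℤ, tB p x k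

lemma jacobiTheta3_eq (p x : ℂ) : jacobiTheta3 p x = ∑' n : ℤ, t3 p x n := rfl

lemma jacobiTheta1t_eq (p x : ℂ) : jacobiTheta1t p x = ∑' n : ℤ, t1 p x n := rfl

lemma summable3 (p : ℂ) (hp : ‖p‖ < 1) (x : ℂ) :
    Summable (fun n : ℤ => ‖t3 p x n‖) := by
  have h := summable_master p hp 1 0 one_pos (fun n => by nlinarith [sq_nonneg n]) 2 0 x
  refine summable_norm_iff.mpr (h.congr fun n => ?_)
  rw [t3, show (1 * n ^ 2 + 0 * n : ℤ) = n ^ 2 by ring]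
  congr 2
  push_cast; ring

lemma summable1 (p : ℂ) (hp : ‖p‖ < 1) (x : ℂ) :
    Summable (fun n : ℤ => ‖t1 p x n‖) := by
  have h := summable_master p hp 1 1 one_pos (fun n => by nlinarith [hsq n]) 2 1 x
  have h2 : Summable (fun n : ℤ => p ^ (n ^ 2 + n).toNat *
      Complex.exp ((2 * (n : ℂ) + 1) * x * Complex.I)) := by
    refine h.congr fun n => ?_
    rw [show (1 * n ^ 2 + 1 * n : ℤ) = n ^ 2 + n by ring]
  refine (summable_norm_iff.mpr h2).congr fun n => ?_
  rw [t1]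
  simp [norm_mul, norm_zpow]

lemma summableA (p : ℂ) (hp : ‖p‖ < 1) (x : ℂ) :
    Summable (fun k : ℤ => ‖tA p x k‖) := by
  have h := summable_master p hp 2 0 two_pos (fun n => by nlinarith [sq_nonneg n]) 4 0 x
  refine summable_norm_iff.mpr (h.congr fun n => ?_)
  rw [tA, show (2 * n ^ 2 + 0 * n : ℤ) = 2 * n ^ 2 by ring]
  congr 2
  push_cast; ring

lemma summableB (p : ℂ) (hp : ‖p‖ < 1) (x : ℂ) :
    Summable (fun k : ℤ => ‖tB p x k‖) := by
  have h := summable_master p hp 2 2 two_pos (fun n => by nlinarith [hsq n]) 4 2 x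
  exact summable_norm_iff.mpr (h.congr fun n => by rw [tB])

lemma pp_mul (p : ℂ) {i j : ℤ} (hi : 0 ≤ i) (hj : 0 ≤ j) (u v : ℂ) :
    p ^ i.toNat * Complex.exp u * (p ^ j.toNat * Complex.exp v)
      = p ^ (i + j).toNat * Complex.exp (u + v) := by
  rw [Int.toNat_add hi hj, pow_add, Complex.exp_add]; ring

lemma keyprod3 (p : ℂ) (hp : ‖p‖ < 1) (x y : ℂ) :
    jacobiTheta3 p (x + y) * jacobiTheta3 p (x - y)
      = thA p x * thA p y + p * (thB p x * thB p y) := by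
  classical
  have S1 := summable3 p hp (x + y)
  have S2 := summable3 p hp (x - y)
  have SAx := summableA p hp x
  have SAy := summableA p hp y
  have SBx := summableB p hp x
  have SBy := summableB p hp y
  set F : ℤ × ℤ → ℂ := fun nm => t3 p (x + y) nm.1 * t3 p (x - y) nm.2 with hF
  have hFsum : Summable F := summable_mul_of_summable_norm S1 S2
  set s : Set (ℤ × ℤ) := {nm : ℤ × ℤ | Even (nm.1 + nm.2)} with hs
  set i₁ : ℤ × ℤ → ℤ × ℤ := fun kl => (kl.1 + kl.2, kl.1 - kl.2) with hi₁
  set i₂ : ℤ × ℤ → ℤ × ℤ := fun kl => (kl.1 + kl.2 + 1, kl.1 - kl.2) with hi₂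
  have hinj1 : Function.Injective i₁ := by
    intro u v h
    rw [hi₁] at h
    simp only [Prod.mk.injEq] at h
    rw [Prod.ext_iff]
    omega
  have hinj2 : Function.Injective i₂ := by
    intro u v h
    rw [hi₂] at h
    simp only [Prod.mk.injEq] at h
    rw [Prod.ext_iff]
    omega
  have hsupp1 : Function.support (s.indicator F) ⊆ Set.range i₁ := by
    intro nm hnm
    have hmem : nm ∈ s := by
      by_contra hcon
      exact hnm (Set.indicator_of_notMem hcon F)
    obtain ⟨t, ht⟩ := hmem
    exact ⟨(t, nm.1 - t), by rw [hi₁]; simp only; rw [Prod.ext_iff]; constructor <;> simp <;> omega⟩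
  have hsupp2 : Function.support (sᶜ.indicator F) ⊆ Set.range i₂ := by
    intro nm hnm
    have hmem : nm ∈ sᶜ := by
      by_contra hcon
      rw [Set.notMem_compl_iff] at hcon
      exact hnm (Set.indicator_of_notMem (by simpa using hcon) F)
    have hodd : Odd (nm.1 + nm.2) := Int.not_even_iff_odd.mp hmem
    obtain ⟨t, ht⟩ := hodd
    exact ⟨(t, nm.1 - t - 1), by rw [hi₂]; simp only; rw [Prod.ext_iff]; constructor <;> simp <;> omega⟩
  have hval1 : ∀ kl : ℤ × ℤ, s.indicator F (i₁ kl) = tA p x kl.1 * tA p y kl.2 := by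
    intro kl
    have hmem : i₁ kl ∈ s := ⟨kl.1, by rw [hi₁]; simp only; ring⟩
    rw [Set.indicator_of_mem hmem, hF, hi₁]
    simp only [t3, tA]
    rw [pp_mul p (sq_nonneg _) (sq_nonneg _), pp_mul p (by positivity) (by positivity)]
    congr 2
    · congr 1; ring
    · push_cast; ring
  have hval2 : ∀ kl : ℤ × ℤ, sᶜ.indicator F (i₂ kl) = p * (tB p x kl.1 * tB p y kl.2) := by
    intro kl
    have hmem : i₂ kl ∈ sᶜ := by
      rw [hi₂]
      intro hcon
      rw [hs] at hcon
      simp only [Set.mem_setOf_eq] at hcon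
      obtain ⟨t, ht⟩ := hcon
      omega
    rw [Set.indicator_of_mem hmem, hF, hi₂]
    simp only [t3, tB]
    rw [pp_mul p (sq_nonneg _) (sq_nonneg _),
      pp_mul p (by nlinarith [hsq kl.1, hsq kl.2]) (by nlinarith [hsq kl.1, hsq kl.2]),
      show ((kl.1 + kl.2 + 1) ^ 2 + (kl.1 - kl.2) ^ 2 : ℤ)
        = (2 * kl.1 ^ 2 + 2 * kl.1 + (2 * kl.2 ^ 2 + 2 * kl.2)) + 1 by ring,
      show ((2 * kl.1 ^ 2 + 2 * kl.1 + (2 * kl.2 ^ 2 + 2 * kl.2)) + 1 : ℤ).toNat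
          = (2 * kl.1 ^ 2 + 2 * kl.1 + (2 * kl.2 ^ 2 + 2 * kl.2) : ℤ).toNat + 1 by
        have h1 := hsq kl.1
        have h2 := hsq kl.2
        omega,
      pow_succ]
    have hexp : Complex.exp (2 * ((kl.1 + kl.2 + 1 : ℤ) : ℂ) * (x + y) * Complex.I
          + 2 * ((kl.1 - kl.2 : ℤ) : ℂ) * (x - y) * Complex.I)
        = Complex.exp ((4 * (kl.1 : ℂ) + 2) * x * Complex.I
          + (4 * (kl.2 : ℂ) + 2) * y * Complex.I) := by
      congr 1
      push_cast
      ring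
    rw [hexp]
    ring
  have heven : ∑' nm, s.indicator F nm = thA p x * thA p y := by
    rw [← Function.Injective.tsum_eq hinj1 hsupp1, tsum_congr hval1, thA, thA,
      tsum_mul_tsum_of_summable_norm SAx SAy]
  have hoddsum : ∑' nm, sᶜ.indicator F nm = p * (thB p x * thB p y) := by
    rw [← Function.Injective.tsum_eq hinj2 hsupp2, tsum_congr hval2, tsum_mul_left, thB, thB,
      tsum_mul_tsum_of_summable_norm SBx SBy]
  calc jacobiTheta3 p (x + y) * jacobiTheta3 p (x - y)
      = ∑' nm : ℤ × ℤ, F nm := by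
        rw [jacobiTheta3_eq, jacobiTheta3_eq, tsum_mul_tsum_of_summable_norm S1 S2]
    _ = (∑' nm, s.indicator F nm) + ∑' nm, sᶜ.indicator F nm := by
        rw [← Summable.tsum_add (hFsum.indicator s) (hFsum.indicator sᶜ)]
        exact tsum_congr fun nm => (Set.indicator_self_add_compl_apply s F nm).symm
    _ = thA p x * thA p y + p * (thB p x * thB p y) := by rw [heven, hoddsum]

lemma keyprod1 (p : ℂ) (hp : ‖p‖ < 1) (x y : ℂ) :
    jacobiTheta1t p (x + y) * jacobiTheta1t p (x - y)
      = thB p x * thA p y - thA p x * thB p y := by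
  classical
  have S1 := summable1 p hp (x + y)
  have S2 := summable1 p hp (x - y)
  have SAx := summableA p hp x
  have SAy := summableA p hp y
  have SBx := summableB p hp x
  have SBy := summableB p hp y
  set F : ℤ × ℤ → ℂ := fun nm => t1 p (x + y) nm.1 * t1 p (x - y) nm.2 with hF
  have hFsum : Summable F := summable_mul_of_summable_norm S1 S2
  set s : Set (ℤ × ℤ) := {nm : ℤ × ℤ | Even (nm.1 + nm.2)} with hs
  set i₁ : ℤ × ℤ → ℤ × ℤ := fun kl => (kl.1 + kl.2, kl.1 - kl.2) with hi₁
  set i₂ : ℤ × ℤ → ℤ × ℤ := fun kl => (kl.1 + kl.2, kl.1 - kl.2 - 1) with hi₂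
  have hinj1 : Function.Injective i₁ := by
    intro u v h
    rw [hi₁] at h
    simp only [Prod.mk.injEq] at h
    rw [Prod.ext_iff]
    omega
  have hinj2 : Function.Injective i₂ := by
    intro u v h
    rw [hi₂] at h
    simp only [Prod.mk.injEq] at h
    rw [Prod.ext_iff]
    omega
  have hsupp1 : Function.support (s.indicator F) ⊆ Set.range i₁ := by
    intro nm hnm
    have hmem : nm ∈ s := by
      by_contra hcon
      exact hnm (Set.indicator_of_notMem hcon F)
    obtain ⟨t, ht⟩ := hmem
    exact ⟨(t, nm.1 - t), by rw [hi₁]; simp only; rw [Prod.ext_iff]; constructor <;> simp <;> omega⟩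
  have hsupp2 : Function.support (sᶜ.indicator F) ⊆ Set.range i₂ := by
    intro nm hnm
    have hmem : nm ∈ sᶜ := by
      by_contra hcon
      rw [Set.notMem_compl_iff] at hcon
      exact hnm (Set.indicator_of_notMem (by simpa using hcon) F)
    have hodd : Odd (nm.1 + nm.2) := Int.not_even_iff_odd.mp hmem
    obtain ⟨t, ht⟩ := hodd
    exact ⟨(t + 1, nm.1 - t - 1), by
      rw [hi₂]; simp only; rw [Prod.ext_iff]; constructor <;> simp <;> omega⟩
  have hrearr : ∀ s1 q1 e1 s2 q2 e2 : ℂ,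
      s1 * q1 * e1 * (s2 * q2 * e2) = s1 * s2 * (q1 * e1 * (q2 * e2)) := by
    intros; ring
  have hval1 : ∀ kl : ℤ × ℤ, s.indicator F (i₁ kl) = tB p x kl.1 * tA p y kl.2 := by
    intro kl
    have hmem : i₁ kl ∈ s := ⟨kl.1, by rw [hi₁]; simp only; ring⟩
    rw [Set.indicator_of_mem hmem, hF, hi₁]
    simp only [t1, tA, tB]
    rw [hrearr]
    have hsign : (-1 : ℂ) ^ (kl.1 + kl.2) * (-1 : ℂ) ^ (kl.1 - kl.2) = 1 := by
      rw [← zpow_add₀ (by norm_num : (-1 : ℂ) ≠ 0),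
        show kl.1 + kl.2 + (kl.1 - kl.2) = 2 * kl.1 by ring, zpow_mul]
      norm_num
    rw [hsign, one_mul,
      pp_mul p (by nlinarith [hsq (kl.1 + kl.2)]) (by nlinarith [hsq (kl.1 - kl.2)]),
      pp_mul p (by nlinarith [hsq kl.1]) (by positivity)]
    congr 2
    · congr 1; ring
    · push_cast; ring
  have hval2 : ∀ kl : ℤ × ℤ, sᶜ.indicator F (i₂ kl) = -(tA p x kl.1 * tB p y kl.2) := by
    intro kl
    have hmem : i₂ kl ∈ sᶜ := by
      rw [hi₂]
      intro hcon
      rw [hs] at hcon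
      simp only [Set.mem_setOf_eq] at hcon
      obtain ⟨t, ht⟩ := hcon
      omega
    rw [Set.indicator_of_mem hmem, hF, hi₂]
    simp only [t1, tA, tB]
    rw [hrearr]
    have hsign : (-1 : ℂ) ^ (kl.1 + kl.2) * (-1 : ℂ) ^ (kl.1 - kl.2 - 1) = -1 := by
      rw [← zpow_add₀ (by norm_num : (-1 : ℂ) ≠ 0),
        show kl.1 + kl.2 + (kl.1 - kl.2 - 1) = 2 * kl.1 - 1 by ring,
        zpow_sub₀ (by norm_num : (-1 : ℂ) ≠ 0), zpow_mul]
      norm_num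
    rw [hsign,
      pp_mul p (by nlinarith [hsq (kl.1 + kl.2)]) (by nlinarith [hsq (kl.1 - kl.2 - 1)]),
      pp_mul p (by positivity) (by nlinarith [hsq kl.2])]
    rw [neg_one_mul]
    congr 3
    · congr 1; ring
    · push_cast; ring
  have heven : ∑' nm, s.indicator F nm = thB p x * thA p y := by
    rw [← Function.Injective.tsum_eq hinj1 hsupp1, tsum_congr hval1, thA, thB,
      tsum_mul_tsum_of_summable_norm SBx SAy]
  have hoddsum : ∑' nm, sᶜ.indicator F nm = -(thA p x * thB p y) := by
    rw [← Function.Injective.tsum_eq hinj2 hsupp2, tsum_congr hval2, tsum_neg, thA, thB,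
      tsum_mul_tsum_of_summable_norm SAx SBy]
  calc jacobiTheta1t p (x + y) * jacobiTheta1t p (x - y)
      = ∑' nm : ℤ × ℤ, F nm := by
        rw [jacobiTheta1t_eq, jacobiTheta1t_eq, tsum_mul_tsum_of_summable_norm S1 S2]
    _ = (∑' nm, s.indicator F nm) + ∑' nm, sᶜ.indicator F nm := by
        rw [← Summable.tsum_add (hFsum.indicator s) (hFsum.indicator sᶜ)]
        exact tsum_congr fun nm => (Set.indicator_self_add_compl_apply s F nm).symm
    _ = thB p x * thA p y - thA p x * thB p y := by rw [heven, hoddsum]; ring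

lemma sq3 (p : ℂ) (hp : ‖p‖ < 1) (x : ℂ) :
    jacobiTheta3 p x ^ 2 = thA p x * thA p 0 + p * (thB p x * thB p 0) := by
  have h := keyprod3 p hp x 0
  rw [add_zero, sub_zero] at h
  rw [sq, h]

lemma sq1 (p : ℂ) (hp : ‖p‖ < 1) (x : ℂ) :
    jacobiTheta1t p x ^ 2 = thB p x * thA p 0 - thA p x * thB p 0 := by
  have h := keyprod1 p hp x 0
  rw [add_zero, sub_zero] at h
  rw [sq, h]

lemma key3 (p : ℂ) (hp : ‖p‖ < 1) (x y : ℂ) :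
    jacobiTheta3 p (x + y) * jacobiTheta3 p (x - y) * jacobiTheta3 p 0 ^ 2
      = jacobiTheta3 p x ^ 2 * jacobiTheta3 p y ^ 2
        + p * (jacobiTheta1t p x ^ 2 * jacobiTheta1t p y ^ 2) := by
  rw [keyprod3 p hp x y, sq3 p hp 0, sq3 p hp x, sq3 p hp y, sq1 p hp x, sq1 p hp y]
  ring

lemma key1 (p : ℂ) (hp : ‖p‖ < 1) (x y : ℂ) :
    jacobiTheta1t p (x + y) * jacobiTheta1t p (x - y) * jacobiTheta3 p 0 ^ 2
      = jacobiTheta1t p x ^ 2 * jacobiTheta3 p y ^ 2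
        - jacobiTheta3 p x ^ 2 * jacobiTheta1t p y ^ 2 := by
  rw [keyprod1 p hp x y, sq3 p hp 0, sq3 p hp x, sq3 p hp y, sq1 p hp x, sq1 p hp y]
  ring

end ThetaHirotaAux

open ThetaHirotaAux

/-- The theta functions `a_m = (θ₃(0)/θ₃(U))^{m²}·θ₃(Z+mU)` and
`b_m = (θ₃(0)/θ₃(U))^{m²}·θ̃₁(Z+mU)` solve the autonomous Hirota equations of the
`Y^{2,0}` relativistic Toda system. -/
theorem theta_solves_Y20_hirota (p : ℂ) (hp : ‖p‖ < 1) (Z U : ℂ)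
    (h0 : jacobiTheta3 p 0 ≠ 0) (hU : jacobiTheta3 p U ≠ 0)
    (w : ℂ) (hw : w = jacobiTheta1t p U / jacobiTheta3 p U)
    (a b : ℤ → ℂ)
    (ha : ∀ m : ℤ, a m = (jacobiTheta3 p 0 / jacobiTheta3 p U) ^ (m ^ 2).toNat *
      jacobiTheta3 p (Z + (m : ℂ) * U))
    (hb : ∀ m : ℤ, b m = (jacobiTheta3 p 0 / jacobiTheta3 p U) ^ (m ^ 2).toNat *
      jacobiTheta1t p (Z + (m : ℂ) * U)) :
    ∀ m : ℤ, a (m + 1) * a (m - 1) = a m ^ 2 + p * w ^ 2 * b m ^ 2 ∧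
      b (m + 1) * b (m - 1) = b m ^ 2 - w ^ 2 * a m ^ 2 := by
  intro m
  set C := jacobiTheta3 p 0 / jacobiTheta3 p U with hC
  set X := Z + (m : ℂ) * U with hX
  have e1 : Z + ((m + 1 : ℤ) : ℂ) * U = X + U := by rw [hX]; push_cast; ring
  have e2 : Z + ((m - 1 : ℤ) : ℂ) * U = X - U := by rw [hX]; push_cast; ring
  have hexp : ((m + 1) ^ 2).toNat + ((m - 1) ^ 2).toNat = (m ^ 2).toNat * 2 + 2 := by
    have h1 : ((m + 1) ^ 2 : ℤ) + (m - 1) ^ 2 = 2 * m ^ 2 + 2 := by ring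
    have h2 : (0 : ℤ) ≤ (m + 1) ^ 2 := sq_nonneg _
    have h3 : (0 : ℤ) ≤ (m - 1) ^ 2 := sq_nonneg _
    have h4 : (0 : ℤ) ≤ m ^ 2 := sq_nonneg _
    generalize ((m + 1) ^ 2 : ℤ) = q1 at h1 h2 ⊢
    generalize ((m - 1) ^ 2 : ℤ) = q2 at h1 h3 ⊢
    generalize (m ^ 2 : ℤ) = q at h1 h4 ⊢
    omega
  have hpow : C ^ ((m + 1) ^ 2).toNat * C ^ ((m - 1) ^ 2).toNat
      = (C ^ (m ^ 2).toNat) ^ 2 * C ^ 2 := by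
    rw [← pow_add, hexp, ← pow_mul, ← pow_add]
  constructor
  · have hkey : C ^ 2 * (jacobiTheta3 p (X + U) * jacobiTheta3 p (X - U))
        = jacobiTheta3 p X ^ 2 + p * w ^ 2 * jacobiTheta1t p X ^ 2 := by
      rw [hw, hC]
      have h := key3 p hp X U
      field_simp
      linear_combination h
    rw [ha, ha, ha, hb, e1, e2, ← hX]
    linear_combination (jacobiTheta3 p (X + U) * jacobiTheta3 p (X - U)) * hpow
      + (C ^ (m ^ 2).toNat) ^ 2 * hkey
  · have hkey : C ^ 2 * (jacobiTheta1t p (X + U) * jacobiTheta1t p (X - U))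
        = jacobiTheta1t p X ^ 2 - w ^ 2 * jacobiTheta3 p X ^ 2 := by
      rw [hw, hC]
      have h := key1 p hp X U
      field_simp
      linear_combination h
    rw [hb, hb, ha, hb, e1, e2, ← hX]
    linear_combination (jacobiTheta1t p (X + U) * jacobiTheta1t p (X - U)) * hpow
      + (C ^ (m ^ 2).toNat) ^ 2 * hkey
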